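/- If λ < 0 and γ < 0, then the zero solution is stable: for every ε ∈ (0,d0] there exist δ > 0 and t1 ≥ t0 such that every admissible solution with v(t1) ≤ δ satisfies 0 ≤ v(t) ≤ ε for all t ≥ t1. -/

import Mathlib

/-- An admissible solution of the reduced equation
`v'(t) = γ·t^{−m/q}·v(t)^s + λ·t^{−n/q}·v(t) + ρ(t)` on `[t0,∞)` with values in
`[0,d0]`, where `|ρ(t)| ≤ M·(t^{−m/q}·v(t)^s + t^{−n/q}·v(t))·(v(t) + t^{−1/q})`. -/
def IsAdmissible (q m n s : ℕ) (γ lam d0 t0 M : ℝ) (v : ℝ → ℝ) : Prop :=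
  (∀ t ≥ t0, v t ∈ Set.Icc (0:ℝ) d0) ∧
  ∃ ρ : ℝ → ℝ,
    (∀ t ≥ t0, |ρ t| ≤
      M * (t ^ (-(m:ℝ)/(q:ℝ)) * v t ^ s + t ^ (-(n:ℝ)/(q:ℝ)) * v t)
        * (v t + t ^ (-(1:ℝ)/(q:ℝ)))) ∧
    (∀ t ≥ t0, HasDerivAt v
      (γ * t ^ (-(m:ℝ)/(q:ℝ)) * v t ^ s + lam * t ^ (-(n:ℝ)/(q:ℝ)) * v t + ρ t) t)

/-- if `λ < 0` and `γ < 0` the zero solution is stable. -/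
theorem stability_of_zero_nonlinear_case
    (q m n s : ℕ) (hq : 0 < q) (hm : 0 < m) (hmn : m < n) (hs : 2 ≤ s)
    (γ lam d0 t0 M : ℝ) (hγ : γ < 0) (hlam : lam < 0)
    (hd0 : 0 < d0) (ht0 : 0 < t0) (hM : 0 < M) :
    ∀ ε ∈ Set.Ioc (0:ℝ) d0, ∃ δ > 0, ∃ t1 ≥ t0,
      ∀ v : ℝ → ℝ, IsAdmissible q m n s γ lam d0 t0 M v → v t1 ≤ δ →
        ∀ t ≥ t1, 0 ≤ v t ∧ v t ≤ ε := by
  intro ε hε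
  obtain ⟨hε0, hεd0⟩ := hε
  -- the smallness threshold
  set c : ℝ := min (-γ) (-lam) / (2 * M) with hc_def
  have hc : 0 < c := by
    apply div_pos (lt_min (by linarith) (by linarith)) (by linarith)
  set b : ℝ := min ε (c / 2) with hb_def
  have hb : 0 < b := lt_min hε0 (by linarith)
  have hbε : b ≤ ε := min_le_left _ _
  have hbc : b ≤ c / 2 := min_le_right _ _
  set t1 : ℝ := max t0 ((2 / c) ^ q) with ht1_def
  have ht1t0 : t1 ≥ t0 := le_max_left _ _
  have ht1pos : 0 < t1 := lt_of_lt_of_le ht0 ht1t0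
  refine ⟨b, hb, t1, ht1t0, ?_⟩
  intro v hadm hvt1 t ht
  obtain ⟨hrange, ρ, hρ, hderiv⟩ := hadm
  have hge0 : ∀ u ≥ t1, 0 ≤ v u := fun u hu => (hrange u (le_trans ht1t0 hu)).1
  -- key: the small negative power is ≤ c/2 for x ≥ t1
  have hsmall : ∀ x : ℝ, t1 ≤ x → x ^ (-(1:ℝ)/(q:ℝ)) ≤ c / 2 := by
    intro x hx
    have h2c : (0:ℝ) < 2 / c := by positivity
    have hxg : (2 / c) ^ q ≤ x := le_trans (le_max_right _ _) hx
    have hbase : (0:ℝ) < (2 / c) ^ q := by positivity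
    have := Real.rpow_le_rpow_of_nonpos hbase hxg
      (z := -(1:ℝ)/(q:ℝ)) (by
        apply div_nonpos_of_nonpos_of_nonneg <;> simp [Nat.cast_nonneg])
    refine le_trans this ?_
    have hqne : ((q:ℝ)) ≠ 0 := Nat.cast_ne_zero.mpr hq.ne'
    rw [← Real.rpow_natCast (2 / c) q, ← Real.rpow_mul h2c.le]
    have : (q:ℝ) * (-(1:ℝ)/(q:ℝ)) = -1 := by field_simp
    rw [this, Real.rpow_neg_one]
    rw [inv_div]
  -- derivative is negative where v = b
  have key : ∀ x : ℝ, t1 ≤ x → v x = b →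
      γ * x ^ (-(m:ℝ)/(q:ℝ)) * v x ^ s + lam * x ^ (-(n:ℝ)/(q:ℝ)) * v x + ρ x < 0 := by
    intro x hx hvx
    have hxt0 : t0 ≤ x := le_trans ht1t0 hx
    have hxpos : 0 < x := lt_of_lt_of_le ht0 hxt0
    set P : ℝ := x ^ (-(m:ℝ)/(q:ℝ)) with hP
    set Q : ℝ := x ^ (-(n:ℝ)/(q:ℝ)) with hQ
    have hPpos : 0 < P := Real.rpow_pos_of_pos hxpos _
    have hQpos : 0 < Q := Real.rpow_pos_of_pos hxpos _
    have hbs : 0 < b ^ s := pow_pos hb s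
    have hρx : ρ x ≤ (min (-γ) (-lam) / 2) * (P * b ^ s + Q * b) := by
      have h1 := (abs_le.mp (hρ x hxt0)).2
      rw [hvx] at h1
      have h2 : b + x ^ (-(1:ℝ)/(q:ℝ)) ≤ c := by
        have := hsmall x hx
        linarith
      have h3 : (0:ℝ) ≤ P * b ^ s + Q * b := by positivity
      calc ρ x ≤ M * (P * b ^ s + Q * b) * (b + x ^ (-(1:ℝ)/(q:ℝ))) := h1
        _ ≤ M * (P * b ^ s + Q * b) * c := by
            apply mul_le_mul_of_nonneg_left h2 (by positivity)
        _ = (min (-γ) (-lam) / 2) * (P * b ^ s + Q * b) := by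
            rw [hc_def]; field_simp
    have hmin1 : min (-γ) (-lam) ≤ -γ := min_le_left _ _
    have hmin2 : min (-γ) (-lam) ≤ -lam := min_le_right _ _
    have hρx2 : ρ x ≤ (-γ/2) * (P * b ^ s) + (-lam/2) * (Q * b) := by
      refine le_trans hρx ?_
      have e1 : (min (-γ) (-lam) / 2) * (P * b ^ s) ≤ (-γ/2) * (P * b ^ s) := by
        apply mul_le_mul_of_nonneg_right (by linarith) (by positivity)
      have e2 : (min (-γ) (-lam) / 2) * (Q * b) ≤ (-lam/2) * (Q * b) := by
        apply mul_le_mul_of_nonneg_right (by linarith) (by positivity)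
      calc (min (-γ) (-lam) / 2) * (P * b ^ s + Q * b)
          = (min (-γ) (-lam) / 2) * (P * b ^ s) + (min (-γ) (-lam) / 2) * (Q * b) := by ring
        _ ≤ (-γ/2) * (P * b ^ s) + (-lam/2) * (Q * b) := add_le_add e1 e2
    rw [hvx]
    have hterm1 : (γ/2) * (P * b ^ s) < 0 := mul_neg_of_neg_of_pos (by linarith) (by positivity)
    have hterm2 : (lam/2) * (Q * b) < 0 := mul_neg_of_neg_of_pos (by linarith) (by positivity)
    nlinarith [hρx2, hterm1, hterm2]
  -- apply the fencing theorem on [t1, t]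
  have hle : v t ≤ b := by
    have hcont : ContinuousOn v (Set.Icc t1 t) := by
      intro x hx
      exact ((hderiv x (le_trans ht1t0 hx.1)).continuousAt).continuousWithinAt
    have hderiv' : ∀ x ∈ Set.Ico t1 t, HasDerivWithinAt v
        (γ * x ^ (-(m:ℝ)/(q:ℝ)) * v x ^ s + lam * x ^ (-(n:ℝ)/(q:ℝ)) * v x + ρ x)
        (Set.Ici x) x := by
      intro x hx
      exact (hderiv x (le_trans ht1t0 hx.1)).hasDerivWithinAt
    have hB : ∀ x : ℝ, HasDerivAt (fun _ : ℝ => b) 0 x := fun x => hasDerivAt_const x b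
    have := image_le_of_deriv_right_lt_deriv_boundary hcont hderiv' hvt1 hB
      (fun x hx hx' => key x hx.1 hx') (Set.right_mem_Icc.mpr ht)
    exact this
  exact ⟨hge0 t ht, le_trans hle hbε⟩
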